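/- arXiv:0808.2878 — 4 statements merged into one kernel-verified Lean document; each statement's English description precedes it below -/
import Mathlib

section
/- Let 0 < θ₀ < 1. For all j, k, l ∈ 𝒵_L with j₃k₃ ≠ 0, j' ≠ 0, k' ≠ 0 and l ≠ 0, and all r, s ∈ {−1,+1}: if |ω_j^r + ω_k^s| > θ₀ |ω_j^r − ω_k^s| (the nonresonant regime), then |B_{jkl}^{rs0} + B_{kjl}^{sr0}| ≤ (2√5 |M| / θ₀)(|j₃| + |k₃|) |ω_j^r + ω_k^s|. -/
noncomputable section
open scoped Classical

abbrev V3 := Fin 3 → ℝ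

/-- Euclidean norm of a vector in ℝ³. -/
def enorm3 (k : V3) : ℝ := Real.sqrt (k 0 ^ 2 + k 1 ^ 2 + k 2 ^ 2)

/-- Horizontal part k' = (k₁, k₂, 0). -/
def horiz (k : V3) : V3 := ![k 0, k 1, 0]

/-- The lattice 𝒵_L of wavevectors. -/
def ZL (L₁ L₂ L₃ : ℝ) : Set V3 :=
  {k | ∃ n : Fin 3 → ℤ,
    k = ![2 * Real.pi * (n 0 : ℝ) / L₁, 2 * Real.pi * (n 1 : ℝ) / L₂,
          2 * Real.pi * (n 2 : ℝ) / L₃]}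

/-- Inertia–gravity frequency ω_k^s = s|k|/k₃. -/
def omg (k : V3) (s : ℝ) : ℝ := s * enorm3 k / k 2

/-- Slow eigenvector X_k^0. -/
def X0 (k : V3) : Fin 3 → ℂ :=
  if horiz k = 0 then ![0, 0, ((Real.sign (k 2) : ℝ) : ℂ)]
  else ![((k 1 / enorm3 k : ℝ) : ℂ), ((-(k 0) / enorm3 k : ℝ) : ℂ), ((k 2 / enorm3 k : ℝ) : ℂ)]

/-- Fast eigenvectors X_k^s, s = ±1. -/
def Xs (k : V3) (s : ℝ) : Fin 3 → ℂ :=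
  if horiz k = 0 then
    ![(((Real.sqrt 2)⁻¹ : ℝ) : ℂ), -Complex.I * s * (((Real.sqrt 2)⁻¹ : ℝ) : ℂ), 0]
  else
    ![(((-(k 1) * k 2 : ℝ) : ℂ) + Complex.I * s * k 0 * enorm3 k) /
        ((Real.sqrt 2 * enorm3 (horiz k) * enorm3 k : ℝ) : ℂ),
      (((k 0 * k 2 : ℝ) : ℂ) + Complex.I * s * k 1 * enorm3 k) /
        ((Real.sqrt 2 * enorm3 (horiz k) * enorm3 k : ℝ) : ℂ),
      ((enorm3 (horiz k) ^ 2 : ℝ) : ℂ) /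
        ((Real.sqrt 2 * enorm3 (horiz k) * enorm3 k : ℝ) : ℂ)]

/-- The incompressible-velocity vector V X_j^r. -/
def VX (j : V3) (r : ℝ) : Fin 3 → ℂ :=
  if horiz j = 0 then Xs j r
  else
    ![(((-(j 1) * j 2 : ℝ) : ℂ) + Complex.I * r * j 0 * enorm3 j) /
        ((Real.sqrt 2 * enorm3 j * enorm3 (horiz j) : ℝ) : ℂ),
      (((j 0 * j 2 : ℝ) : ℂ) + Complex.I * r * j 1 * enorm3 j) /
        ((Real.sqrt 2 * enorm3 j * enorm3 (horiz j) : ℝ) : ℂ),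
      (-Complex.I * r * ((enorm3 (horiz j) ^ 2 * enorm3 j / j 2 : ℝ) : ℂ)) /
        ((Real.sqrt 2 * enorm3 j * enorm3 (horiz j) : ℝ) : ℂ)]

/-- Bilinear pairing a·b on ℂ³. -/
def dotC (a b : Fin 3 → ℂ) : ℂ := a 0 * b 0 + a 1 * b 1 + a 2 * b 2

/-- Pairing of a complex vector with a real vector. -/
def dotR (a : Fin 3 → ℂ) (k : V3) : ℂ :=
  a 0 * (k 0 : ℂ) + a 1 * (k 1 : ℂ) + a 2 * (k 2 : ℂ)

/-- The interaction coefficient B_{jkl}^{rs0}. -/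
def Brs0 (M : ℝ) (j k l : V3) (r s : ℝ) : ℂ :=
  if j + k = l ∧ j 2 * k 2 ≠ 0 ∧ l ≠ 0 then
    Complex.I * M * dotR (VX j r) k * dotC (Xs k s) (X0 l)
  else 0

-- basic lemmas
lemma enorm3_nonneg (k : V3) : 0 ≤ enorm3 k := Real.sqrt_nonneg _
lemma enorm3_sq (k : V3) : enorm3 k ^ 2 = k 0 ^ 2 + k 1 ^ 2 + k 2 ^ 2 :=
  Real.sq_sqrt (by positivity)
lemma enorm3_horiz_sq (k : V3) : enorm3 (horiz k) ^ 2 = k 0 ^ 2 + k 1 ^ 2 := by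
  have h0 : horiz k 0 = k 0 := rfl
  have h1 : horiz k 1 = k 1 := rfl
  have h2 : horiz k 2 = 0 := rfl
  rw [enorm3_sq, h0, h1, h2]; ring
lemma enorm3_horiz_pos (k : V3) (hk : horiz k ≠ 0) : 0 < enorm3 (horiz k) := by
  rcases (enorm3_nonneg (horiz k)).lt_or_eq with h | h
  · exact h
  · exfalso; apply hk
    have h2 : k 0 ^ 2 + k 1 ^ 2 = 0 := by
      have := enorm3_horiz_sq k; rw [← h] at this; linarith [this]
    have h0 : k 0 = 0 := by nlinarith [sq_nonneg (k 0), sq_nonneg (k 1)]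
    have h1 : k 1 = 0 := by nlinarith [sq_nonneg (k 0), sq_nonneg (k 1)]
    funext i; fin_cases i <;> simp [horiz, h0, h1]
lemma enorm3_horiz_le (k : V3) : enorm3 (horiz k) ≤ enorm3 k := by
  rw [enorm3, enorm3]
  apply Real.sqrt_le_sqrt
  simp [horiz]; nlinarith [sq_nonneg (k 2)]
lemma enorm3_pos (k : V3) (hk : horiz k ≠ 0) : 0 < enorm3 k :=
  lt_of_lt_of_le (enorm3_horiz_pos k hk) (enorm3_horiz_le k)
lemma abs_le_enorm3 (k : V3) (i : Fin 3) : |k i| ≤ enorm3 k := by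
  fin_cases i
  · show |k 0| ≤ enorm3 k
    rw [← Real.sqrt_sq_eq_abs]; apply Real.sqrt_le_sqrt
    nlinarith [sq_nonneg (k 1), sq_nonneg (k 2)]
  · show |k 1| ≤ enorm3 k
    rw [← Real.sqrt_sq_eq_abs]; apply Real.sqrt_le_sqrt
    nlinarith [sq_nonneg (k 0), sq_nonneg (k 2)]
  · show |k 2| ≤ enorm3 k
    rw [← Real.sqrt_sq_eq_abs]; apply Real.sqrt_le_sqrt
    nlinarith [sq_nonneg (k 0), sq_nonneg (k 1)]

lemma abs_comp (x y d : ℝ) :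
    ‖(↑x + Complex.I * ↑y) / ↑d‖ = Real.sqrt (x ^ 2 + y ^ 2) / |d| := by
  rw [norm_div, Complex.norm_real, Real.norm_eq_abs, mul_comm Complex.I, Complex.norm_add_mul_I]
lemma sq_abs_comp (x y d : ℝ) :
    ‖(↑x + Complex.I * ↑y) / ↑d‖ ^ 2 = (x ^ 2 + y ^ 2) / d ^ 2 := by
  rw [abs_comp, div_pow, Real.sq_sqrt (by positivity), sq_abs]

lemma abs_omg (k : V3) (s : ℝ) (hs : s = 1 ∨ s = -1) : |omg k s| = enorm3 k / |k 2| := by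
  rw [omg, abs_div, abs_mul, abs_of_nonneg (enorm3_nonneg k)]
  rcases hs with h | h <;> simp [h]

-- Xs is a unit vector
lemma Xs_unit (k : V3) (s : ℝ) (hs : s = 1 ∨ s = -1) (hk' : horiz k ≠ 0) :
    ‖Xs k s 0‖ ^ 2 + ‖Xs k s 1‖ ^ 2 + ‖Xs k s 2‖ ^ 2 = 1 := by
  have hp := enorm3_horiz_pos k hk'
  have hq := enorm3_pos k hk'
  have hp2 := enorm3_horiz_sq k
  have hq2 := enorm3_sq k
  have hs2 : s ^ 2 = 1 := by rcases hs with h | h <;> simp [h]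
  have h0 : Xs k s 0 = (↑(-(k 1) * k 2) + Complex.I * ↑(s * (k 0 * enorm3 k))) /
      ↑(Real.sqrt 2 * enorm3 (horiz k) * enorm3 k) := by
    simp only [Xs, if_neg hk', Matrix.cons_val_zero]; push_cast; ring
  have h1 : Xs k s 1 = (↑(k 0 * k 2) + Complex.I * ↑(s * (k 1 * enorm3 k))) /
      ↑(Real.sqrt 2 * enorm3 (horiz k) * enorm3 k) := by
    simp only [Xs, if_neg hk', Matrix.cons_val_one, Matrix.head_cons]; push_cast; ring
  have h2 : Xs k s 2 = (↑(enorm3 (horiz k) ^ 2) + Complex.I * ↑(0 : ℝ)) /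
      ↑(Real.sqrt 2 * enorm3 (horiz k) * enorm3 k) := by
    simp only [Xs, if_neg hk']
    simp only [Matrix.cons_val_two, Matrix.tail_cons, Matrix.head_cons]; norm_num
  rw [h0, h1, h2, sq_abs_comp, sq_abs_comp, sq_abs_comp]
  have hD : (Real.sqrt 2 * enorm3 (horiz k) * enorm3 k) ^ 2
      = 2 * enorm3 (horiz k) ^ 2 * enorm3 k ^ 2 := by
    rw [mul_pow, mul_pow, Real.sq_sqrt (by norm_num : (0:ℝ) ≤ 2)]
  rw [hD]
  have hne : 2 * enorm3 (horiz k) ^ 2 * enorm3 k ^ 2 ≠ 0 := by positivity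
  field_simp
  linear_combination ((k 0)^2*(enorm3 k)^2 + (k 1)^2*(enorm3 k)^2) * hs2 +
    (enorm3 (horiz k)^2 + (k 0^2 + k 1^2) - 2*(enorm3 k)^2) * hp2 - (k 0^2 + k 1^2) * hq2

-- X0 is a unit vector
lemma X0_unit (l : V3) (hl0 : l ≠ 0) :
    ‖X0 l 0‖ ^ 2 + ‖X0 l 1‖ ^ 2 + ‖X0 l 2‖ ^ 2 = 1 := by
  by_cases hl' : horiz l = 0
  · have h0 : l 0 = 0 := by have := congrFun hl' 0; simpa [horiz] using this
    have h1 : l 1 = 0 := by have := congrFun hl' 1; simpa [horiz] using this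
    have h2 : l 2 ≠ 0 := by
      intro h2
      apply hl0; funext i; fin_cases i <;> simp [h0, h1, h2]
    simp only [X0, if_pos hl', Matrix.cons_val_zero, Matrix.cons_val_one, Matrix.head_cons]
    rcases h2.lt_or_gt with h | h
    · rw [Real.sign_of_neg h]; simp only [Matrix.cons_val_two, Matrix.tail_cons, Matrix.head_cons]; norm_num
    · rw [Real.sign_of_pos h]; simp only [Matrix.cons_val_two, Matrix.tail_cons, Matrix.head_cons]; norm_num
  · have hq := enorm3_pos l hl'
    have hq2 := enorm3_sq l
    simp only [X0, if_neg hl', Matrix.cons_val_zero, Matrix.cons_val_one, Matrix.head_cons,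
      Matrix.cons_val_two, Matrix.tail_cons, Complex.norm_real, Real.norm_eq_abs, sq_abs]
    field_simp
    nlinarith [hq2]

-- Cauchy-Schwarz style bound
lemma dotC_le_one (a b : Fin 3 → ℂ)
    (ha : ‖a 0‖ ^ 2 + ‖a 1‖ ^ 2 + ‖a 2‖ ^ 2 = 1)
    (hb : ‖b 0‖ ^ 2 + ‖b 1‖ ^ 2 + ‖b 2‖ ^ 2 = 1) :
    ‖dotC a b‖ ≤ 1 := by
  have htri : ‖dotC a b‖ ≤
      ‖a 0‖ * ‖b 0‖ + ‖a 1‖ * ‖b 1‖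
        + ‖a 2‖ * ‖b 2‖ := by
    unfold dotC
    calc ‖a 0 * b 0 + a 1 * b 1 + a 2 * b 2‖
        ≤ ‖a 0 * b 0 + a 1 * b 1‖ + ‖a 2 * b 2‖ := norm_add_le _ _
      _ ≤ ‖a 0 * b 0‖ + ‖a 1 * b 1‖ + ‖a 2 * b 2‖ := by
          have := norm_add_le (a 0 * b 0) (a 1 * b 1); linarith
      _ = _ := by rw [norm_mul, norm_mul, norm_mul]
  refine htri.trans ?_
  nlinarith [sq_nonneg (‖a 0‖ - ‖b 0‖),
    sq_nonneg (‖a 1‖ - ‖b 1‖),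
    sq_nonneg (‖a 2‖ - ‖b 2‖)]

set_option maxHeartbeats 1000000 in
lemma dotR_VX_bound (j k : V3) (r s : ℝ) (hr : r = 1 ∨ r = -1) (hs : s = 1 ∨ s = -1)
    (hj' : horiz j ≠ 0) (hj3 : j 2 ≠ 0) (hk3 : k 2 ≠ 0) :
    ‖dotR (VX j r) k‖ ≤ 2 * |k 2| * (|omg j r| + |omg k s|) := by
  have hp := enorm3_horiz_pos j hj'
  have hq := enorm3_pos j hj'
  have hp2 := enorm3_horiz_sq j
  have hq2 := enorm3_sq j
  have hr2 : r ^ 2 = 1 := by rcases hr with h | h <;> simp [h]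
  have hra : |r| = 1 := by rcases hr with h | h <;> simp [h]
  have hj2 : 0 < |j 2| := abs_pos.mpr hj3
  have hk2 : 0 < |k 2| := abs_pos.mpr hk3
  have hD : 0 < Real.sqrt 2 * enorm3 j * enorm3 (horiz j) := by positivity
  have hs2' : (1:ℝ) ≤ Real.sqrt 2 := by
    nlinarith [Real.sq_sqrt (by norm_num : (0:ℝ) ≤ 2), Real.sqrt_nonneg 2]
  have h0 : VX j r 0 = (↑(-(j 1) * j 2) + Complex.I * ↑(r * (j 0 * enorm3 j))) /
      ↑(Real.sqrt 2 * enorm3 j * enorm3 (horiz j)) := by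
    simp only [VX, if_neg hj', Matrix.cons_val_zero]; push_cast; ring
  have h1 : VX j r 1 = (↑(j 0 * j 2) + Complex.I * ↑(r * (j 1 * enorm3 j))) /
      ↑(Real.sqrt 2 * enorm3 j * enorm3 (horiz j)) := by
    simp only [VX, if_neg hj', Matrix.cons_val_one, Matrix.head_cons]; push_cast; ring
  have h2 : VX j r 2 = (↑(0:ℝ) + Complex.I * ↑(-(r * (enorm3 (horiz j) ^ 2 * enorm3 j / j 2)))) /
      ↑(Real.sqrt 2 * enorm3 j * enorm3 (horiz j)) := by
    simp only [VX, if_neg hj', Matrix.cons_val_two, Matrix.tail_cons, Matrix.head_cons]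
    push_cast; ring
  have b0 : ‖VX j r 0‖ ≤ 1 := by
    rw [h0, abs_comp, abs_of_pos hD, div_le_one hD]
    calc Real.sqrt ((-(j 1) * j 2) ^ 2 + (r * (j 0 * enorm3 j)) ^ 2)
        ≤ Real.sqrt ((Real.sqrt 2 * enorm3 j * enorm3 (horiz j)) ^ 2) := by
          apply Real.sqrt_le_sqrt
          have hj22 : j 2 ^ 2 ≤ enorm3 j ^ 2 := by nlinarith [sq_nonneg (j 0), sq_nonneg (j 1)]
          have e1 : (-(j 1) * j 2) ^ 2 ≤ j 1 ^ 2 * enorm3 j ^ 2 := by nlinarith [sq_nonneg (j 1)]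
          have e2 : (r * (j 0 * enorm3 j)) ^ 2 = j 0 ^ 2 * enorm3 j ^ 2 := by
            linear_combination (j 0 * enorm3 j) ^ 2 * hr2
          have e3 : j 1 ^ 2 * enorm3 j ^ 2 + j 0 ^ 2 * enorm3 j ^ 2
              = enorm3 (horiz j) ^ 2 * enorm3 j ^ 2 := by rw [hp2]; ring
          have e4 : (0:ℝ) ≤ enorm3 (horiz j) ^ 2 * enorm3 j ^ 2 := by positivity
          have hD2 : (Real.sqrt 2 * enorm3 j * enorm3 (horiz j)) ^ 2
              = 2 * enorm3 j ^ 2 * enorm3 (horiz j) ^ 2 := by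
            rw [mul_pow, mul_pow, Real.sq_sqrt (by norm_num : (0:ℝ) ≤ 2)]
          rw [hD2]
          linarith [e1, e2, e3, e4]
      _ = Real.sqrt 2 * enorm3 j * enorm3 (horiz j) := Real.sqrt_sq hD.le
  have b1 : ‖VX j r 1‖ ≤ 1 := by
    rw [h1, abs_comp, abs_of_pos hD, div_le_one hD]
    calc Real.sqrt ((j 0 * j 2) ^ 2 + (r * (j 1 * enorm3 j)) ^ 2)
        ≤ Real.sqrt ((Real.sqrt 2 * enorm3 j * enorm3 (horiz j)) ^ 2) := by
          apply Real.sqrt_le_sqrt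
          have hj22 : j 2 ^ 2 ≤ enorm3 j ^ 2 := by nlinarith [sq_nonneg (j 0), sq_nonneg (j 1)]
          have e1 : (j 0 * j 2) ^ 2 ≤ j 0 ^ 2 * enorm3 j ^ 2 := by nlinarith [sq_nonneg (j 0)]
          have e2 : (r * (j 1 * enorm3 j)) ^ 2 = j 1 ^ 2 * enorm3 j ^ 2 := by
            linear_combination (j 1 * enorm3 j) ^ 2 * hr2
          have e3 : j 1 ^ 2 * enorm3 j ^ 2 + j 0 ^ 2 * enorm3 j ^ 2
              = enorm3 (horiz j) ^ 2 * enorm3 j ^ 2 := by rw [hp2]; ring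
          have e4 : (0:ℝ) ≤ enorm3 (horiz j) ^ 2 * enorm3 j ^ 2 := by positivity
          have hD2 : (Real.sqrt 2 * enorm3 j * enorm3 (horiz j)) ^ 2
              = 2 * enorm3 j ^ 2 * enorm3 (horiz j) ^ 2 := by
            rw [mul_pow, mul_pow, Real.sq_sqrt (by norm_num : (0:ℝ) ≤ 2)]
          rw [hD2]
          linarith [e1, e2, e3, e4]
      _ = Real.sqrt 2 * enorm3 j * enorm3 (horiz j) := Real.sqrt_sq hD.le
  have b2 : ‖VX j r 2‖ ≤ |omg j r| := by
    rw [h2, abs_comp, abs_of_pos hD, abs_omg j r hr]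
    have e1 : Real.sqrt ((0:ℝ) ^ 2 + (-(r * (enorm3 (horiz j) ^ 2 * enorm3 j / j 2))) ^ 2)
        = enorm3 (horiz j) ^ 2 * enorm3 j / |j 2| := by
      rw [show ((0:ℝ) ^ 2 + (-(r * (enorm3 (horiz j) ^ 2 * enorm3 j / j 2))) ^ 2)
          = (r * (enorm3 (horiz j) ^ 2 * enorm3 j / j 2)) ^ 2 by ring,
        Real.sqrt_sq_eq_abs, abs_mul, hra, one_mul, abs_div, abs_of_nonneg (by positivity)]
    rw [e1, div_div, div_le_div_iff₀ (by positivity) hj2]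
    have hple : enorm3 (horiz j) ≤ enorm3 j := enorm3_horiz_le j
    nlinarith [mul_le_mul_of_nonneg_right hple
        (show (0:ℝ) ≤ enorm3 (horiz j) * enorm3 j * |j 2| by positivity),
      mul_le_mul_of_nonneg_right hs2'
        (show (0:ℝ) ≤ enorm3 j * (enorm3 j * enorm3 (horiz j) * |j 2|) by positivity)]
  have htri : ‖dotR (VX j r) k‖ ≤
      ‖VX j r 0‖ * |k 0| + ‖VX j r 1‖ * |k 1|
        + ‖VX j r 2‖ * |k 2| := by
    unfold dotR
    calc ‖VX j r 0 * ↑(k 0) + VX j r 1 * ↑(k 1) + VX j r 2 * ↑(k 2)‖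
        ≤ ‖VX j r 0 * ↑(k 0) + VX j r 1 * ↑(k 1)‖
            + ‖VX j r 2 * ↑(k 2)‖ := norm_add_le _ _
      _ ≤ ‖VX j r 0 * ↑(k 0)‖ + ‖VX j r 1 * ↑(k 1)‖
            + ‖VX j r 2 * ↑(k 2)‖ := by
          have := norm_add_le (VX j r 0 * ↑(k 0)) (VX j r 1 * ↑(k 1)); linarith
      _ = _ := by rw [norm_mul, norm_mul, norm_mul, Complex.norm_real, Complex.norm_real,
            Complex.norm_real, Real.norm_eq_abs, Real.norm_eq_abs, Real.norm_eq_abs]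
  have hk0 : |k 0| ≤ |omg k s| * |k 2| := by
    have := abs_le_enorm3 k 0
    have he : enorm3 k = |omg k s| * |k 2| := by
      rw [abs_omg k s hs, div_mul_cancel₀ _ (ne_of_gt hk2)]
    linarith [he ▸ this]
  have hk1 : |k 1| ≤ |omg k s| * |k 2| := by
    have := abs_le_enorm3 k 1
    have he : enorm3 k = |omg k s| * |k 2| := by
      rw [abs_omg k s hs, div_mul_cancel₀ _ (ne_of_gt hk2)]
    linarith [he ▸ this]
  have hnn0 := abs_nonneg (k 0)
  have hnn1 := abs_nonneg (k 1)
  have hnn2 := abs_nonneg (k 2)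
  have hnnj := abs_nonneg (omg j r)
  have hnnk := abs_nonneg (omg k s)
  calc ‖dotR (VX j r) k‖ ≤ _ := htri
    _ ≤ 1 * |k 0| + 1 * |k 1| + |omg j r| * |k 2| := by
        gcongr
    _ ≤ 2 * |k 2| * (|omg j r| + |omg k s|) := by
        nlinarith [hk0, hk1, mul_nonneg hnn2 hnnj]

set_option maxHeartbeats 1000000 in
/-- bound in the nonresonant regime (eq. (A.13)). -/
theorem nonresonant_bound
    (θ₀ : ℝ) (hθ0 : 0 < θ₀) (hθ1 : θ₀ < 1)
    (L₁ L₂ L₃ : ℝ) (hL₁ : 0 < L₁) (hL₂ : 0 < L₂) (hL₃ : 0 < L₃)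
    (j k l : V3) (hj : j ∈ ZL L₁ L₂ L₃) (hk : k ∈ ZL L₁ L₂ L₃) (hl : l ∈ ZL L₁ L₂ L₃)
    (hjk3 : j 2 * k 2 ≠ 0) (hj' : horiz j ≠ 0) (hk' : horiz k ≠ 0) (hl0 : l ≠ 0)
    (r s : ℝ) (hr : r = 1 ∨ r = -1) (hs : s = 1 ∨ s = -1)
    (hfar : θ₀ * |omg j r - omg k s| < |omg j r + omg k s|) :
    ‖Brs0 (L₁ * L₂ * L₃) j k l r s + Brs0 (L₁ * L₂ * L₃) k j l s r‖ ≤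
      2 * Real.sqrt 5 * (L₁ * L₂ * L₃) / θ₀ * (|j 2| + |k 2|) *
        |omg j r + omg k s| := by
  have hj3 : j 2 ≠ 0 := fun h => hjk3 (by rw [h, zero_mul])
  have hk3 : k 2 ≠ 0 := fun h => hjk3 (by rw [h, mul_zero])
  set M : ℝ := L₁ * L₂ * L₃ with hMdef
  have hM : 0 < M := by positivity
  have hRHSpos : 0 ≤ 2 * Real.sqrt 5 * M / θ₀ * (|j 2| + |k 2|) * |omg j r + omg k s| := by
    apply mul_nonneg (mul_nonneg (by positivity) (by positivity)) (abs_nonneg _)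
  by_cases hsum : j + k = l
  · have hc1 : j + k = l ∧ j 2 * k 2 ≠ 0 ∧ l ≠ 0 := ⟨hsum, hjk3, hl0⟩
    have hc2 : k + j = l ∧ k 2 * j 2 ≠ 0 ∧ l ≠ 0 :=
      ⟨by rw [add_comm]; exact hsum, by rwa [mul_comm], hl0⟩
    rw [Brs0, if_pos hc1, Brs0, if_pos hc2]
    -- unit vector facts
    have hXk := Xs_unit k s hs hk'
    have hXj := Xs_unit j r hr hj'
    have hX0 := X0_unit l hl0
    have e1 : ‖dotC (Xs k s) (X0 l)‖ ≤ 1 := dotC_le_one _ _ hXk hX0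
    have e2 : ‖dotC (Xs j r) (X0 l)‖ ≤ 1 := dotC_le_one _ _ hXj hX0
    have d1 : ‖dotR (VX j r) k‖ ≤ 2 * |k 2| * (|omg j r| + |omg k s|) :=
      dotR_VX_bound j k r s hr hs hj' hj3 hk3
    have d2 : ‖dotR (VX k s) j‖ ≤ 2 * |j 2| * (|omg k s| + |omg j r|) :=
      dotR_VX_bound k j s r hs hr hk' hk3 hj3
    -- frequency control
    have hA : 2 * |omg j r| ≤ |omg j r + omg k s| + |omg j r - omg k s| := by
      have h := abs_add_le (omg j r + omg k s) (omg j r - omg k s)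
      have h2 : omg j r + omg k s + (omg j r - omg k s) = 2 * omg j r := by ring
      rw [h2, abs_mul, abs_two] at h
      linarith
    have hB : 2 * |omg k s| ≤ |omg j r + omg k s| + |omg j r - omg k s| := by
      have h : |omg j r + omg k s - (omg j r - omg k s)| ≤ |omg j r + omg k s| + |omg j r - omg k s| := abs_sub _ _
      have h2 : omg j r + omg k s - (omg j r - omg k s) = 2 * omg k s := by ring
      rw [h2, abs_mul, abs_two] at h
      linarith
    have hfreq : (|omg j r| + |omg k s|) * θ₀ ≤ 2 * |omg j r + omg k s| := by
      nlinarith [hfar, abs_nonneg (omg j r + omg k s), abs_nonneg (omg j r - omg k s),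
        abs_nonneg (omg j r), abs_nonneg (omg k s)]
    have hsqrt5 : (2:ℝ) ≤ Real.sqrt 5 := by
      nlinarith [Real.sq_sqrt (by norm_num : (0:ℝ) ≤ 5), Real.sqrt_nonneg 5]
    -- assemble
    have habs1 : ‖Complex.I * ↑M * dotR (VX j r) k * dotC (Xs k s) (X0 l)‖
        = M * (‖dotR (VX j r) k‖ * ‖dotC (Xs k s) (X0 l)‖) := by
      rw [norm_mul, norm_mul, norm_mul, Complex.norm_I, Complex.norm_real, Real.norm_eq_abs,
        abs_of_pos hM, one_mul, mul_assoc]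
    have habs2 : ‖Complex.I * ↑M * dotR (VX k s) j * dotC (Xs j r) (X0 l)‖
        = M * (‖dotR (VX k s) j‖ * ‖dotC (Xs j r) (X0 l)‖) := by
      rw [norm_mul, norm_mul, norm_mul, Complex.norm_I, Complex.norm_real, Real.norm_eq_abs,
        abs_of_pos hM, one_mul, mul_assoc]
    have nn1 := norm_nonneg (dotR (VX j r) k)
    have nn2 := norm_nonneg (dotR (VX k s) j)
    have nnj := abs_nonneg (omg j r)
    have nnk := abs_nonneg (omg k s)
    have nnj2 := abs_nonneg (j 2)
    have nnk2 := abs_nonneg (k 2)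
    calc ‖Complex.I * ↑M * dotR (VX j r) k * dotC (Xs k s) (X0 l)
          + Complex.I * ↑M * dotR (VX k s) j * dotC (Xs j r) (X0 l)‖
        ≤ ‖Complex.I * ↑M * dotR (VX j r) k * dotC (Xs k s) (X0 l)‖
          + ‖Complex.I * ↑M * dotR (VX k s) j * dotC (Xs j r) (X0 l)‖ :=
          norm_add_le _ _
      _ = M * (‖dotR (VX j r) k‖ * ‖dotC (Xs k s) (X0 l)‖)
          + M * (‖dotR (VX k s) j‖ * ‖dotC (Xs j r) (X0 l)‖) := by
          rw [habs1, habs2]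
      _ ≤ M * (2 * |k 2| * (|omg j r| + |omg k s|) * 1)
          + M * (2 * |j 2| * (|omg k s| + |omg j r|) * 1) := by
          have t1 : ‖dotR (VX j r) k‖ * ‖dotC (Xs k s) (X0 l)‖
              ≤ 2 * |k 2| * (|omg j r| + |omg k s|) * 1 :=
            mul_le_mul d1 e1 (norm_nonneg _) (by positivity)
          have t2 : ‖dotR (VX k s) j‖ * ‖dotC (Xs j r) (X0 l)‖
              ≤ 2 * |j 2| * (|omg k s| + |omg j r|) * 1 :=
            mul_le_mul d2 e2 (norm_nonneg _) (by positivity)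
          exact add_le_add (mul_le_mul_of_nonneg_left t1 hM.le)
            (mul_le_mul_of_nonneg_left t2 hM.le)
      _ = 2 * M * (|j 2| + |k 2|) * (|omg j r| + |omg k s|) := by ring
      _ ≤ 2 * M * (|j 2| + |k 2|) * (2 / θ₀ * |omg j r + omg k s|) := by
          have hfr2 : |omg j r| + |omg k s| ≤ 2 / θ₀ * |omg j r + omg k s| := by
            rw [div_mul_eq_mul_div, le_div_iff₀ hθ0]; linarith [hfreq]
          exact mul_le_mul_of_nonneg_left hfr2 (by positivity)
      _ = 4 * M * (|j 2| + |k 2|) * |omg j r + omg k s| / θ₀ := by ring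
      _ ≤ 2 * Real.sqrt 5 * M * (|j 2| + |k 2|) * |omg j r + omg k s| / θ₀ := by
          have hkey : 4 * M * (|j 2| + |k 2|) * |omg j r + omg k s|
              ≤ 2 * Real.sqrt 5 * M * (|j 2| + |k 2|) * |omg j r + omg k s| := by
            nlinarith [hsqrt5, mul_nonneg (mul_nonneg hM.le (add_nonneg nnj2 nnk2))
              (abs_nonneg (omg j r + omg k s))]
          exact div_le_div_of_nonneg_right hkey hθ0.le
      _ = 2 * Real.sqrt 5 * M / θ₀ * (|j 2| + |k 2|) * |omg j r + omg k s| := by ring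
  · have hc2 : ¬(k + j = l ∧ k 2 * j 2 ≠ 0 ∧ l ≠ 0) := by
      intro h; exact hsum (by rw [add_comm]; exact h.1)
    rw [Brs0, if_neg (fun h => hsum h.1), Brs0, if_neg hc2, add_zero, norm_zero]
    exact hRHSpos
end
end

section
/- For all j, k ∈ 𝒵_L with j₃k₃ ≠ 0, j' ≠ 0 and k' = −j', setting l = j + k and assuming l ≠ 0 (so l' = 0 and l₃ = j₃ + k₃ ≠ 0), and for all r, s ∈ {−1,+1}: B_{jkl}^{rs0} + B_{kjl}^{sr0} = |M| sgn(l₃) (|j'| |k'| / (2 |j| |k|)) (j₃ + k₃)(ω_j^r + ω_k^s); consequently |B_{jkl}^{rs0} + B_{kjl}^{sr0}| ≤ (|M|/2)(|j₃| + |k₃|) |ω_j^r + ω_k^s|. -/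
noncomputable section
open scoped Classical

set_option maxHeartbeats 1000000 in
/-- the case l' = 0 (eq. (A.14)–(A.15)). -/
theorem case_l_horizontal_zero
    (L₁ L₂ L₃ : ℝ) (hL₁ : 0 < L₁) (hL₂ : 0 < L₂) (hL₃ : 0 < L₃)
    (j k : V3) (hj : j ∈ ZL L₁ L₂ L₃) (hk : k ∈ ZL L₁ L₂ L₃)
    (hjk3 : j 2 * k 2 ≠ 0) (hj' : horiz j ≠ 0) (hk' : horiz k = -horiz j)
    (l : V3) (hlsum : l = j + k) (hl0 : l ≠ 0)
    (r s : ℝ) (hr : r = 1 ∨ r = -1) (hs : s = 1 ∨ s = -1) :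
    Brs0 (L₁ * L₂ * L₃) j k l r s + Brs0 (L₁ * L₂ * L₃) k j l s r =
      (((L₁ * L₂ * L₃) * Real.sign (l 2) *
        (enorm3 (horiz j) * enorm3 (horiz k) / (2 * enorm3 j * enorm3 k)) *
        (j 2 + k 2) * (omg j r + omg k s) : ℝ) : ℂ) ∧
    ‖Brs0 (L₁ * L₂ * L₃) j k l r s + Brs0 (L₁ * L₂ * L₃) k j l s r‖ ≤
      (L₁ * L₂ * L₃) / 2 * (|j 2| + |k 2|) * |omg j r + omg k s| := by
  have hc : j 2 ≠ 0 := left_ne_zero_of_mul hjk3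
  have hd : k 2 ≠ 0 := right_ne_zero_of_mul hjk3
  have hk0 : k 0 = -(j 0) := by have := congrFun hk' 0; simpa [horiz] using this
  have hk1 : k 1 = -(j 1) := by have := congrFun hk' 1; simpa [horiz] using this
  have hl0' : l 0 = 0 := by rw [hlsum]; simp [Pi.add_apply, hk0]
  have hl1' : l 1 = 0 := by rw [hlsum]; simp [Pi.add_apply, hk1]
  have hl2 : l 2 = j 2 + k 2 := by rw [hlsum]; simp [Pi.add_apply]
  have hcd : j 2 + k 2 ≠ 0 := by
    intro h
    apply hl0
    funext i
    fin_cases i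
    · exact hl0'
    · exact hl1'
    · show l 2 = 0; rw [hl2, h]
  have hl2ne : l 2 ≠ 0 := by rw [hl2]; exact hcd
  have hhl : horiz l = 0 := by
    funext i; fin_cases i <;> simp [horiz, hl0', hl1']
  have hk'' : horiz k ≠ 0 := by rw [hk']; exact neg_ne_zero.mpr hj'
  have hab : 0 < j 0 ^ 2 + j 1 ^ 2 := by
    rcases (show j 0 ≠ 0 ∨ j 1 ≠ 0 by
      by_contra h; push_neg at h
      exact hj' (funext fun i => by fin_cases i <;> simp [horiz, h.1, h.2])) with h | h
    · positivity
    · positivity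
  have hhj : enorm3 (horiz j) = Real.sqrt (j 0 ^ 2 + j 1 ^ 2) := by
    simp [enorm3, horiz]
  have hhjpos : 0 < enorm3 (horiz j) := by rw [hhj]; positivity
  have hhjsq : enorm3 (horiz j) ^ 2 = j 0 ^ 2 + j 1 ^ 2 := by
    rw [hhj]; exact Real.sq_sqrt hab.le
  have hhk : enorm3 (horiz k) = enorm3 (horiz j) := by
    simp [enorm3, horiz, hk0, hk1]
  have hnj : 0 < enorm3 j := by
    have : 0 < j 0 ^ 2 + j 1 ^ 2 + j 2 ^ 2 := by positivity
    exact Real.sqrt_pos.mpr this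
  have hnk : 0 < enorm3 k := by
    have : 0 < k 0 ^ 2 + k 1 ^ 2 + k 2 ^ 2 := by positivity
    exact Real.sqrt_pos.mpr this
  have hnksq : enorm3 k ^ 2 = j 0 ^ 2 + j 1 ^ 2 + k 2 ^ 2 := by
    rw [enorm3, hk0, hk1, Real.sq_sqrt (by positivity)]; ring
  have h2 : (0:ℝ) < Real.sqrt 2 := by positivity
  have h2sq : Real.sqrt 2 ^ 2 = 2 := Real.sq_sqrt (by norm_num)
  have hjle : enorm3 (horiz j) ≤ enorm3 j := by
    rw [hhj, enorm3]
    exact Real.sqrt_le_sqrt (by nlinarith [sq_nonneg (j 2)])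
  have hkle : enorm3 (horiz j) ≤ enorm3 k := by
    rw [hhj, enorm3, hk0, hk1]
    refine Real.sqrt_le_sqrt ?_
    nlinarith [sq_nonneg (k 2)]
  -- eigenvector dot products
  have hsqC : ((enorm3 (horiz j) : ℝ) : ℂ) ^ 2 = (j 0 : ℂ) ^ 2 + (j 1 : ℂ) ^ 2 := by
    rw [← Complex.ofReal_pow, hhjsq]; push_cast; ring
  have hX0l : X0 l = ![0, 0, ((Real.sign (l 2) : ℝ) : ℂ)] := by
    rw [X0, if_pos hhl]
  have eC1 : dotC (Xs k s) (X0 l) =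
      ((enorm3 (horiz j) / (Real.sqrt 2 * enorm3 k) * Real.sign (l 2) : ℝ) : ℂ) := by
    rw [dotC, hX0l, Xs, if_neg hk'', hhk]
    have : enorm3 (horiz j) ^ 2 / (Real.sqrt 2 * enorm3 (horiz j) * enorm3 k) =
        enorm3 (horiz j) / (Real.sqrt 2 * enorm3 k) := by
      field_simp
    simp only [Matrix.cons_val_zero, Matrix.cons_val_one, Matrix.head_cons,
      Matrix.cons_val_two, Matrix.tail_cons, mul_zero, zero_add, zero_mul, add_zero]
    rw [← this]; push_cast; ring
  have eC2 : dotC (Xs j r) (X0 l) =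
      ((enorm3 (horiz j) / (Real.sqrt 2 * enorm3 j) * Real.sign (l 2) : ℝ) : ℂ) := by
    rw [dotC, hX0l, Xs, if_neg hj']
    have : enorm3 (horiz j) ^ 2 / (Real.sqrt 2 * enorm3 (horiz j) * enorm3 j) =
        enorm3 (horiz j) / (Real.sqrt 2 * enorm3 j) := by
      field_simp
    simp only [Matrix.cons_val_zero, Matrix.cons_val_one, Matrix.head_cons,
      Matrix.cons_val_two, Matrix.tail_cons, mul_zero, zero_add, zero_mul, add_zero]
    rw [← this]; push_cast; ring
  have hcC : (j 2 : ℂ) ≠ 0 := Complex.ofReal_ne_zero.mpr hc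
  have hdC : (k 2 : ℂ) ≠ 0 := Complex.ofReal_ne_zero.mpr hd
  have hnjC : ((enorm3 j : ℝ) : ℂ) ≠ 0 := Complex.ofReal_ne_zero.mpr hnj.ne'
  have hnkC : ((enorm3 k : ℝ) : ℂ) ≠ 0 := Complex.ofReal_ne_zero.mpr hnk.ne'
  have hhjC : ((enorm3 (horiz j) : ℝ) : ℂ) ≠ 0 := Complex.ofReal_ne_zero.mpr hhjpos.ne'
  have h2C : ((Real.sqrt 2 : ℝ) : ℂ) ≠ 0 := Complex.ofReal_ne_zero.mpr h2.ne'
  have hD1C : ((Real.sqrt 2 : ℝ) : ℂ) * ((enorm3 j : ℝ) : ℂ) * ((enorm3 (horiz j) : ℝ) : ℂ) ≠ 0 :=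
    mul_ne_zero (mul_ne_zero h2C hnjC) hhjC
  have hD2C : ((Real.sqrt 2 : ℝ) : ℂ) * ((enorm3 k : ℝ) : ℂ) * ((enorm3 (horiz j) : ℝ) : ℂ) ≠ 0 :=
    mul_ne_zero (mul_ne_zero h2C hnkC) hhjC
  have eR1 : dotR (VX j r) k =
      Complex.I * ((-r * enorm3 (horiz j) * (j 2 + k 2) / (Real.sqrt 2 * j 2) : ℝ) : ℂ) := by
    rw [dotR, VX, if_neg hj', hk0, hk1]
    simp only [Matrix.cons_val_zero, Matrix.cons_val_one, Matrix.head_cons,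
      Matrix.cons_val_two, Matrix.tail_cons]
    push_cast
    field_simp [hcC, hdC, hnjC, hhjC, h2C]
    linear_combination ((j 2 : ℂ) * Complex.I * (r : ℂ) * ((enorm3 j : ℝ) : ℂ)) * hsqC
  have eR2 : dotR (VX k s) j =
      Complex.I * ((-s * enorm3 (horiz j) * (j 2 + k 2) / (Real.sqrt 2 * k 2) : ℝ) : ℂ) := by
    rw [dotR, VX, if_neg hk'', hk0, hk1, hhk]
    simp only [Matrix.cons_val_zero, Matrix.cons_val_one, Matrix.head_cons,
      Matrix.cons_val_two, Matrix.tail_cons]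
    push_cast
    field_simp [hcC, hdC, hnjC, hhjC, h2C]
    linear_combination ((k 2 : ℂ) * Complex.I * (s : ℂ) * ((enorm3 k : ℝ) : ℂ)) * hsqC
  have hB1 : Brs0 (L₁ * L₂ * L₃) j k l r s =
      Complex.I * (L₁ * L₂ * L₃ : ℝ) *
        (Complex.I * ((-r * enorm3 (horiz j) * (j 2 + k 2) / (Real.sqrt 2 * j 2) : ℝ) : ℂ)) *
        ((enorm3 (horiz j) / (Real.sqrt 2 * enorm3 k) * Real.sign (l 2) : ℝ) : ℂ) := by
    rw [Brs0, if_pos ⟨hlsum.symm, hjk3, hl0⟩, eR1, eC1]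
  have hB2 : Brs0 (L₁ * L₂ * L₃) k j l s r =
      Complex.I * (L₁ * L₂ * L₃ : ℝ) *
        (Complex.I * ((-s * enorm3 (horiz j) * (j 2 + k 2) / (Real.sqrt 2 * k 2) : ℝ) : ℂ)) *
        ((enorm3 (horiz j) / (Real.sqrt 2 * enorm3 j) * Real.sign (l 2) : ℝ) : ℂ) := by
    rw [Brs0, if_pos ⟨by rw [add_comm]; exact hlsum.symm, by rwa [mul_comm], hl0⟩, eR2, eC2]
  have hB1' : Brs0 (L₁ * L₂ * L₃) j k l r s =
      ((-((L₁ * L₂ * L₃) * (-r * enorm3 (horiz j) * (j 2 + k 2) / (Real.sqrt 2 * j 2)) *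
        (enorm3 (horiz j) / (Real.sqrt 2 * enorm3 k) * Real.sign (l 2))) : ℝ) : ℂ) := by
    rw [hB1]
    push_cast
    linear_combination ((L₁ : ℂ) * L₂ * L₃ *
      (-(r : ℂ) * (enorm3 (horiz j) : ℝ) * ((j 2 : ℂ) + (k 2 : ℂ)) /
        (((Real.sqrt 2 : ℝ) : ℂ) * (j 2 : ℂ))) *
      (((enorm3 (horiz j) : ℝ) : ℂ) / (((Real.sqrt 2 : ℝ) : ℂ) * ((enorm3 k : ℝ) : ℂ)) *
        ((Real.sign (l 2) : ℝ) : ℂ))) * Complex.I_sq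
  have hB2' : Brs0 (L₁ * L₂ * L₃) k j l s r =
      ((-((L₁ * L₂ * L₃) * (-s * enorm3 (horiz j) * (j 2 + k 2) / (Real.sqrt 2 * k 2)) *
        (enorm3 (horiz j) / (Real.sqrt 2 * enorm3 j) * Real.sign (l 2))) : ℝ) : ℂ) := by
    rw [hB2]
    push_cast
    linear_combination ((L₁ : ℂ) * L₂ * L₃ *
      (-(s : ℂ) * (enorm3 (horiz j) : ℝ) * ((j 2 : ℂ) + (k 2 : ℂ)) /
        (((Real.sqrt 2 : ℝ) : ℂ) * (k 2 : ℂ))) *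
      (((enorm3 (horiz j) : ℝ) : ℂ) / (((Real.sqrt 2 : ℝ) : ℂ) * ((enorm3 j : ℝ) : ℂ)) *
        ((Real.sign (l 2) : ℝ) : ℂ))) * Complex.I_sq
  have key : Brs0 (L₁ * L₂ * L₃) j k l r s + Brs0 (L₁ * L₂ * L₃) k j l s r =
      (((L₁ * L₂ * L₃) * Real.sign (l 2) *
        (enorm3 (horiz j) * enorm3 (horiz k) / (2 * enorm3 j * enorm3 k)) *
        (j 2 + k 2) * (omg j r + omg k s) : ℝ) : ℂ) := by
    rw [hB1', hB2', ← Complex.ofReal_add, Complex.ofReal_inj, hhk, omg, omg]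
    field_simp [hc, hd, hnj.ne', hnk.ne', hhjpos.ne', h2.ne']
    linear_combination (-(Real.sign (l 2) * (r * k 2 * enorm3 j + j 2 * enorm3 k * s))) * h2sq
  refine ⟨key, ?_⟩
  rw [key, Complex.norm_real, Real.norm_eq_abs, hhk]
  have hM : 0 < L₁ * L₂ * L₃ := by positivity
  have hsg : |Real.sign (l 2)| ≤ 1 := by
    rcases Real.sign_apply_eq (l 2) with h | h | h <;> rw [h] <;> norm_num
  have hQ : |enorm3 (horiz j) * enorm3 (horiz j) / (2 * enorm3 j * enorm3 k)| ≤ 1 / 2 := by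
    rw [abs_of_nonneg (by positivity)]
    rw [div_le_iff₀ (by positivity)]
    nlinarith [mul_le_mul hjle hkle hhjpos.le hnj.le]
  calc |L₁ * L₂ * L₃ * Real.sign (l 2) *
        (enorm3 (horiz j) * enorm3 (horiz j) / (2 * enorm3 j * enorm3 k)) *
        (j 2 + k 2) * (omg j r + omg k s)|
      = |L₁ * L₂ * L₃| * |Real.sign (l 2)| *
        |enorm3 (horiz j) * enorm3 (horiz j) / (2 * enorm3 j * enorm3 k)| *
        |j 2 + k 2| * |omg j r + omg k s| := by
        rw [abs_mul, abs_mul, abs_mul, abs_mul]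
    _ ≤ (L₁ * L₂ * L₃) * 1 * (1 / 2) * (|j 2| + |k 2|) * |omg j r + omg k s| := by
        rw [abs_of_pos hM]
        gcongr <;> first
          | exact hsg
          | exact hQ
          | exact abs_add_le _ _
    _ = L₁ * L₂ * L₃ / 2 * (|j 2| + |k 2|) * |omg j r + omg k s| := by ring
end
end

section
/- For all j ∈ ℝ³ with j₃ ≠ 0, all k ∈ ℝ³, and all r ∈ {−1,+1}: |V X_j^r · k| ≤ √2 |k'| + |j'| |k₃| / |j₃|. -/
noncomputable section
open scoped Classical

lemma sum_abs_le_sqrt2 (x y : ℝ) : |x| + |y| ≤ Real.sqrt 2 * Real.sqrt (x^2 + y^2) := by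
  have h1 : (|x| + |y|)^2 ≤ 2 * (x^2 + y^2) := by
    nlinarith [sq_abs x, sq_abs y, sq_nonneg (|x| - |y|)]
  have h2 : |x| + |y| = Real.sqrt ((|x| + |y|)^2) := (Real.sqrt_sq (by positivity)).symm
  rw [h2, ← Real.sqrt_mul (by norm_num : (0:ℝ) ≤ 2)]
  exact Real.sqrt_le_sqrt h1

set_option maxHeartbeats 1600000 in
/-- the bound (2.36) on V X_j^r · k. -/
theorem VX_dot_bound
    (j k : V3) (hj3 : j 2 ≠ 0)
    (r : ℝ) (hr : r = 1 ∨ r = -1) :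
    ‖dotR (VX j r) k‖ ≤
      Real.sqrt 2 * enorm3 (horiz k) + enorm3 (horiz j) * |k 2| / |j 2| := by
  have hs2 : (0:ℝ) < Real.sqrt 2 := by positivity
  have hs2sq : Real.sqrt 2 ^ 2 = 2 := Real.sq_sqrt (by norm_num)
  have hs2ge : (1:ℝ) ≤ Real.sqrt 2 := by nlinarith
  have hr2 : r^2 = 1 := by rcases hr with h | h <;> simp [h]
  have hek : enorm3 (horiz k) = Real.sqrt (k 0 ^ 2 + k 1 ^ 2) := by
    simp [enorm3, horiz]
  have hek0 : 0 ≤ enorm3 (horiz k) := by rw [hek]; positivity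
  have hsum : |k 0| + |k 1| ≤ Real.sqrt 2 * enorm3 (horiz k) := by
    rw [hek]; exact sum_abs_le_sqrt2 _ _
  by_cases hj : horiz j = 0
  · have h0 : j 0 = 0 := by have := congrFun hj 0; simpa [horiz] using this
    have h1 : j 1 = 0 := by have := congrFun hj 1; simpa [horiz] using this
    have hhj : enorm3 (horiz j) = 0 := by simp [enorm3, horiz, h0, h1]
    rw [hhj]
    have : dotR (VX j r) k
        = (((Real.sqrt 2)⁻¹ : ℝ):ℂ) * ((k 0 : ℂ) + ((-(r * k 1) : ℝ):ℂ) * Complex.I) := by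
      simp only [VX, Xs, if_pos hj, dotR, Matrix.cons_val_zero, Matrix.cons_val_one,
        Matrix.head_cons, Matrix.cons_val_two, Matrix.tail_cons]
      push_cast
      ring
    rw [this, norm_mul, Complex.norm_real, Real.norm_eq_abs, Complex.norm_add_mul_I]
    have habs : Real.sqrt (k 0 ^ 2 + (-(r * k 1))^2) = Real.sqrt (k 0 ^ 2 + k 1 ^ 2) := by
      congr 1
      nlinarith [hr2]
    rw [habs, ← hek]
    have h1 : |(Real.sqrt 2)⁻¹| = (Real.sqrt 2)⁻¹ := abs_of_pos (by positivity)
    rw [h1]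
    have h2 : (Real.sqrt 2)⁻¹ ≤ Real.sqrt 2 := by
      rw [inv_le_iff_one_le_mul₀ hs2]
      nlinarith
    rw [zero_mul, zero_div, add_zero]
    nlinarith [hek0, mul_le_mul_of_nonneg_right h2 hek0]
  · -- horizontal part of j is nonzero
    have hjj : j 0 ≠ 0 ∨ j 1 ≠ 0 := by
      by_contra hcon
      push_neg at hcon
      exact hj (by funext i; fin_cases i <;> simp [horiz, hcon.1, hcon.2])
    set n := enorm3 j with hn_def
    set h := enorm3 (horiz j) with hh_def
    have hh2 : h ^ 2 = j 0 ^ 2 + j 1 ^ 2 := by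
      rw [hh_def]
      simp only [enorm3, horiz, Matrix.cons_val_zero, Matrix.cons_val_one, Matrix.head_cons,
        Matrix.cons_val_two, Matrix.tail_cons]
      rw [Real.sq_sqrt (by positivity)]
      ring
    have hn2 : n ^ 2 = j 0 ^ 2 + j 1 ^ 2 + j 2 ^ 2 := by
      rw [hn_def, enorm3, Real.sq_sqrt (by positivity)]
    have hhpos : 0 < h := by
      have : 0 < h ^ 2 := by
        rw [hh2]
        rcases hjj with h' | h'
        · nlinarith [pow_pos (abs_pos.mpr h') 2, sq_abs (j 0), sq_nonneg (j 1)]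
        · nlinarith [pow_pos (abs_pos.mpr h') 2, sq_abs (j 1), sq_nonneg (j 0)]
      have h0 : 0 ≤ h := by rw [hh_def]; exact Real.sqrt_nonneg _
      nlinarith [this, h0]
    have hj2sq : 0 < j 2 ^ 2 := by
      have := pow_pos (abs_pos.mpr hj3) 2
      rwa [sq_abs] at this
    have hnpos : 0 < n := by
      have : 0 < n ^ 2 := by rw [hn2]; nlinarith [sq_nonneg (j 0), sq_nonneg (j 1)]
      have h0 : 0 ≤ n := by rw [hn_def]; exact Real.sqrt_nonneg _
      nlinarith [this, h0]
    set d : ℝ := Real.sqrt 2 * n * h with hd_def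
    have hdpos : 0 < d := by positivity
    have hexp : dotR (VX j r) k =
        ((((-(j 1) * j 2 : ℝ) : ℂ) + ((r * j 0 * n : ℝ):ℂ) * Complex.I) / (d:ℂ)) * (k 0 : ℂ)
        + ((((j 0 * j 2 : ℝ) : ℂ) + ((r * j 1 * n : ℝ):ℂ) * Complex.I) / (d:ℂ)) * (k 1 : ℂ)
        + ((((0 : ℝ) : ℂ) + ((-(r * (h ^ 2 * n / j 2)) : ℝ):ℂ) * Complex.I) / (d:ℂ)) * (k 2 : ℂ) := by
      simp only [VX, if_neg hj, dotR, Matrix.cons_val_zero, Matrix.cons_val_one,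
        Matrix.head_cons, Matrix.cons_val_two, Matrix.tail_cons, ← hn_def, ← hh_def, ← hd_def]
      push_cast
      ring
    rw [hexp]
    have tri : ∀ a b c : ℂ, ‖a + b + c‖ ≤
        ‖a‖ + ‖b‖ + ‖c‖ := by
      intro a b c
      calc ‖a + b + c‖ ≤ ‖a + b‖ + ‖c‖ :=
            norm_add_le _ _
        _ ≤ ‖a‖ + ‖b‖ + ‖c‖ := by
            have := norm_add_le a b; linarith
    refine le_trans (tri _ _ _) ?_
    have habs : ∀ (x y z : ℝ), ‖(((x:ℝ):ℂ) + ((y:ℝ):ℂ) * Complex.I) / (d:ℂ) * (z:ℂ)‖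
        = Real.sqrt (x^2 + y^2) / d * |z| := by
      intro x y z
      rw [norm_mul, norm_div, Complex.norm_add_mul_I, Complex.norm_real, Real.norm_eq_abs,
        Complex.norm_real, Real.norm_eq_abs,
        abs_of_pos hdpos]
    rw [habs, habs, habs]
    -- bound the first two numerators by h * n
    have key1 : Real.sqrt ((-(j 1) * j 2)^2 + (r * j 0 * n)^2) ≤ h * n := by
      rw [show h * n = Real.sqrt ((h*n)^2) from (Real.sqrt_sq (by positivity)).symm]
      apply Real.sqrt_le_sqrt
      have e1 : (r * j 0 * n)^2 = j 0^2 * n^2 := by rw [mul_pow, mul_pow, hr2, one_mul]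
      have e2 : ((-(j 1) * j 2)^2 + j 0^2 * n^2) + j 1^2 * (j 0^2 + j 1^2) = (h*n)^2 := by
        rw [mul_pow h n 2, hh2, hn2]; ring
      have e3 : (0:ℝ) ≤ j 1^2 * (j 0^2 + j 1^2) := by positivity
      linarith [e1, e2, e3]
    have key2 : Real.sqrt ((j 0 * j 2)^2 + (r * j 1 * n)^2) ≤ h * n := by
      rw [show h * n = Real.sqrt ((h*n)^2) from (Real.sqrt_sq (by positivity)).symm]
      apply Real.sqrt_le_sqrt
      have e1 : (r * j 1 * n)^2 = j 1^2 * n^2 := by rw [mul_pow, mul_pow, hr2, one_mul]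
      have e2 : ((j 0 * j 2)^2 + j 1^2 * n^2) + j 0^2 * (j 0^2 + j 1^2) = (h*n)^2 := by
        rw [mul_pow h n 2, hh2, hn2]; ring
      have e3 : (0:ℝ) ≤ j 0^2 * (j 0^2 + j 1^2) := by positivity
      linarith [e1, e2, e3]
    have key3 : Real.sqrt ((0:ℝ)^2 + (-(r * (h ^ 2 * n / j 2)))^2) = h^2 * n / |j 2| := by
      have e1 : (0:ℝ)^2 + (-(r * (h ^ 2 * n / j 2)))^2 = r^2 * ((h^2*n)^2 / j 2^2) := by
        ring
      have e2 : (h^2*n/|j 2|)^2 = (h^2*n)^2 / j 2^2 := by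
        rw [div_pow, sq_abs]
      rw [e1, hr2, one_mul, ← e2,
        Real.sqrt_sq (div_nonneg (mul_nonneg (sq_nonneg h) hnpos.le) (abs_nonneg _))]
    rw [key3]
    have hninv : h * n / d = (Real.sqrt 2)⁻¹ := by
      rw [div_eq_iff (ne_of_gt hdpos), hd_def,
        show (Real.sqrt 2)⁻¹ * (Real.sqrt 2 * n * h)
            = ((Real.sqrt 2)⁻¹ * Real.sqrt 2) * (n * h) from by ring,
        inv_mul_cancel₀ (ne_of_gt hs2), one_mul, mul_comm]
    have b1 : Real.sqrt ((-(j 1) * j 2)^2 + (r * j 0 * n)^2) / d * |k 0|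
        ≤ (Real.sqrt 2)⁻¹ * |k 0| := by
      rw [← hninv]
      gcongr
    have b2 : Real.sqrt ((j 0 * j 2)^2 + (r * j 1 * n)^2) / d * |k 1|
        ≤ (Real.sqrt 2)⁻¹ * |k 1| := by
      rw [← hninv]
      gcongr
    have b3 : h^2 * n / |j 2| / d * |k 2| ≤ h * |k 2| / |j 2| := by
      have hj2abs : 0 < |j 2| := abs_pos.mpr hj3
      have hq : h^2 * n / |j 2| / d = h / (Real.sqrt 2 * |j 2|) := by
        rw [div_div, div_eq_div_iff (ne_of_gt (mul_pos hj2abs hdpos))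
          (ne_of_gt (mul_pos hs2 hj2abs)), hd_def]
        ring
      rw [hq, div_mul_eq_mul_div, div_le_div_iff₀ (mul_pos hs2 hj2abs) hj2abs]
      have h1 : |j 2| ≤ Real.sqrt 2 * |j 2| := le_mul_of_one_le_left hj2abs.le hs2ge
      exact mul_le_mul_of_nonneg_left h1 (mul_nonneg hhpos.le (abs_nonneg _))
    have bsum : (Real.sqrt 2)⁻¹ * |k 0| + (Real.sqrt 2)⁻¹ * |k 1| ≤ Real.sqrt 2 * enorm3 (horiz k) := by
      have h1 : (Real.sqrt 2)⁻¹ * (|k 0| + |k 1|) ≤ (Real.sqrt 2)⁻¹ * (Real.sqrt 2 * enorm3 (horiz k)) := by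
        gcongr
      have h2 : (Real.sqrt 2)⁻¹ * (Real.sqrt 2 * enorm3 (horiz k)) = enorm3 (horiz k) := by
        rw [← mul_assoc, inv_mul_cancel₀ (ne_of_gt hs2), one_mul]
      have h3 : enorm3 (horiz k) ≤ Real.sqrt 2 * enorm3 (horiz k) := by nlinarith
      nlinarith [h1, h2, h3]
    linarith [b1, b2, b3, bsum]
end
end

section
/- For every k ∈ ℝ³ with k₃ ≠ 0 and k' ≠ 0, the three vectors X_k^0, X_k^{+1}, X_k^{−1} form an orthonormal basis of ℂ³ with respect to the standard Hermitian inner product. -/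
noncomputable section
open scoped Classical

set_option maxHeartbeats 1000000 in
/-- for k₃ ≠ 0 and k' ≠ 0, the vectors X_k^0, X_k^{+1}, X_k^{−1}
form an orthonormal basis of ℂ³ for the standard Hermitian inner product. -/
theorem Xk_orthonormal_basis
    (k : V3) (hk3 : k 2 ≠ 0) (hk' : horiz k ≠ 0) :
    Orthonormal ℂ
      (![(WithLp.equiv 2 (Fin 3 → ℂ)).symm (X0 k),
         (WithLp.equiv 2 (Fin 3 → ℂ)).symm (Xs k 1),
         (WithLp.equiv 2 (Fin 3 → ℂ)).symm (Xs k (-1))] :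
        Fin 3 → EuclideanSpace ℂ (Fin 3)) ∧
    Submodule.span ℂ
      (Set.range
        (![(WithLp.equiv 2 (Fin 3 → ℂ)).symm (X0 k),
           (WithLp.equiv 2 (Fin 3 → ℂ)).symm (Xs k 1),
           (WithLp.equiv 2 (Fin 3 → ℂ)).symm (Xs k (-1))] :
          Fin 3 → EuclideanSpace ℂ (Fin 3))) = ⊤ := by
  have h01 : (0:ℝ) < k 0 ^ 2 + k 1 ^ 2 := by
    rcases eq_or_ne (k 0) 0 with h|h
    · rcases eq_or_ne (k 1) 0 with h1|h1
      · exact absurd (by funext i; fin_cases i <;> simp [horiz, h, h1]) hk'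
      · positivity
    · positivity
  have hn2 : enorm3 k ^ 2 = k 0 ^ 2 + k 1 ^ 2 + k 2 ^ 2 := Real.sq_sqrt (by positivity)
  have hnpos : 0 < enorm3 k := Real.sqrt_pos.2 (by positivity)
  have hh2 : enorm3 (horiz k) ^ 2 = k 0 ^ 2 + k 1 ^ 2 := by
    simp only [enorm3, horiz, Matrix.cons_val_zero, Matrix.cons_val_one, Matrix.head_cons,
      Matrix.cons_val_two, Matrix.tail_cons]
    rw [Real.sq_sqrt (by positivity)]; ring
  have hhpos : 0 < enorm3 (horiz k) := by
    rw [enorm3]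
    apply Real.sqrt_pos.2
    simp only [horiz, Matrix.cons_val_zero, Matrix.cons_val_one, Matrix.head_cons,
      Matrix.cons_val_two, Matrix.tail_cons]
    nlinarith
  have hs2 : (0:ℝ) < Real.sqrt 2 := by positivity
  have hnC : ((enorm3 k : ℝ) : ℂ) ≠ 0 := by exact_mod_cast hnpos.ne'
  have hhC : ((enorm3 (horiz k) : ℝ) : ℂ) ≠ 0 := by exact_mod_cast hhpos.ne'
  have hsC : ((Real.sqrt 2 : ℝ) : ℂ) ≠ 0 := by exact_mod_cast hs2.ne'
  have cn2 : ((enorm3 k : ℝ) : ℂ)^2 = (k 0:ℂ)^2 + (k 1:ℂ)^2 + (k 2:ℂ)^2 := by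
    rw [← Complex.ofReal_pow, hn2]; push_cast; ring
  have ch2 : ((enorm3 (horiz k) : ℝ) : ℂ)^2 = (k 0:ℂ)^2 + (k 1:ℂ)^2 := by
    rw [← Complex.ofReal_pow, hh2]; push_cast; ring
  have c2 : ((Real.sqrt 2 : ℝ) : ℂ)^2 = 2 := by
    rw [← Complex.ofReal_pow, Real.sq_sqrt (by norm_num : (0:ℝ) ≤ 2)]; norm_num
  have horth : Orthonormal ℂ
      (![(WithLp.equiv 2 (Fin 3 → ℂ)).symm (X0 k),
         (WithLp.equiv 2 (Fin 3 → ℂ)).symm (Xs k 1),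
         (WithLp.equiv 2 (Fin 3 → ℂ)).symm (Xs k (-1))] :
        Fin 3 → EuclideanSpace ℂ (Fin 3)) := by
    rw [orthonormal_iff_ite]
    intro i j
    fin_cases i <;> fin_cases j <;>
      simp only [Matrix.cons_val_zero, Matrix.cons_val_one, Matrix.head_cons,
        Matrix.cons_val_two, Matrix.tail_cons, X0, Xs, if_neg hk', PiLp.inner_apply,
        RCLike.inner_apply, Fin.sum_univ_three, WithLp.equiv_symm_apply, PiLp.toLp_apply, Fin.isValue, Fin.reduceFinMk, Fin.reduceEq, map_pow, Complex.ofReal_one,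
        Fin.mk_one, Fin.zero_eta, ite_true, ite_false, reduceIte, map_div₀, map_add, map_mul,
        Complex.conj_ofReal, Complex.conj_I, map_neg, map_one, Complex.ofReal_neg,
        Complex.ofReal_mul, Complex.ofReal_div, Complex.ofReal_pow]
    all_goals field_simp
    · linear_combination (-cn2)
    · linear_combination ((k 2 : ℝ):ℂ) * ch2
    · linear_combination ((k 2 : ℝ):ℂ) * ch2
    · linear_combination ((k 2 : ℝ):ℂ) * ch2
    · linear_combination (-((k 0:ℂ)^2 + (k 1:ℂ)^2)) * cn2 + (((enorm3 (horiz k) : ℝ) : ℂ)^2 + ((k 0:ℂ)^2 + (k 1:ℂ)^2) - 2*((enorm3 k : ℝ) : ℂ)^2) * ch2 - ((enorm3 (horiz k) : ℝ) : ℂ)^2*((enorm3 k : ℝ) : ℂ)^2 * c2 - ((k 0:ℂ)^2 + (k 1:ℂ)^2)*((enorm3 k : ℝ) : ℂ)^2 * Complex.I_sq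
    · linear_combination (-((k 0:ℂ)^2 + (k 1:ℂ)^2)) * cn2 + (((enorm3 (horiz k) : ℝ) : ℂ)^2 + ((k 0:ℂ)^2 + (k 1:ℂ)^2)) * ch2 + ((k 0:ℂ)^2 + (k 1:ℂ)^2)*((enorm3 k : ℝ) : ℂ)^2 * Complex.I_sq
    · linear_combination ((k 2 : ℝ):ℂ) * ch2
    · linear_combination (-((k 0:ℂ)^2 + (k 1:ℂ)^2)) * cn2 + (((enorm3 (horiz k) : ℝ) : ℂ)^2 + ((k 0:ℂ)^2 + (k 1:ℂ)^2)) * ch2 + ((k 0:ℂ)^2 + (k 1:ℂ)^2)*((enorm3 k : ℝ) : ℂ)^2 * Complex.I_sq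
    · linear_combination (-((k 0:ℂ)^2 + (k 1:ℂ)^2)) * cn2 + (((enorm3 (horiz k) : ℝ) : ℂ)^2 + ((k 0:ℂ)^2 + (k 1:ℂ)^2) - 2*((enorm3 k : ℝ) : ℂ)^2) * ch2 - ((enorm3 (horiz k) : ℝ) : ℂ)^2*((enorm3 k : ℝ) : ℂ)^2 * c2 - ((k 0:ℂ)^2 + (k 1:ℂ)^2)*((enorm3 k : ℝ) : ℂ)^2 * Complex.I_sq
  exact ⟨horth, horth.linearIndependent.span_eq_top_of_card_eq_finrank (by simp)⟩
end
end
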